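/- For a binary parity-check constraint on bits b_1,...,b_d ∈ {0,1}, the sum b_1 + ... + b_d is even if and only if for every subset F of {1,...,d} of odd cardinality, the inequality ∑_{i∈F} b_i − ∑_{i∉F} b_i ≤ |F| − 1 holds. -/

import Mathlib

open Finset

/-- A 0/1 parity-check constraint: the sum of the bits is even iff all parity
polytope inequalities indexed by odd-cardinality subsets hold. -/
theorem parity_polytope_characterization (d : ℕ) (b : Fin d → ℤ)
    (hb : ∀ i, b i = 0 ∨ b i = 1) :
    Even (∑ i, b i) ↔
      ∀ F : Finset (Fin d), Odd F.card →
        (∑ i ∈ F, b i) - (∑ i ∈ Fᶜ, b i) ≤ (F.card : ℤ) - 1 := by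
  constructor
  · intro he F hF
    by_contra h
    push_neg at h
    have h1 : ∑ i ∈ F, b i ≤ (F.card : ℤ) := by
      calc ∑ i ∈ F, b i ≤ ∑ _i ∈ F, (1 : ℤ) :=
            Finset.sum_le_sum (fun i _ => by rcases hb i with h | h <;> omega)
        _ = F.card := by simp
    have h2 : (0 : ℤ) ≤ ∑ i ∈ Fᶜ, b i :=
      Finset.sum_nonneg (fun i _ => by rcases hb i with h | h <;> omega)
    have hs : ∑ i, b i = (F.card : ℤ) := by
      rw [← Finset.sum_add_sum_compl F]; omega
    rw [hs] at he
    have : Odd ((F.card : ℤ)) := by exact_mod_cast hF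
    exact (Int.not_odd_iff_even.mpr he) this
  · intro h
    by_contra ho
    rw [Int.not_even_iff_odd] at ho
    set F := univ.filter (fun i => b i = 1) with hFdef
    have hFs : ∑ i ∈ F, b i = (F.card : ℤ) := by
      rw [Finset.sum_congr rfl (fun i hi => (Finset.mem_filter.mp hi).2)]
      simp [hFdef]
    have hFc : ∑ i ∈ Fᶜ, b i = 0 := by
      apply Finset.sum_eq_zero
      intro i hi
      have : ¬ b i = 1 := by
        simpa [hFdef] using (Finset.mem_compl.mp hi)
      rcases hb i with h' | h' <;> omega
    have hsum : ∑ i, b i = (F.card : ℤ) := by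
      rw [← Finset.sum_add_sum_compl F, hFs, hFc, add_zero]
    have hodd : Odd F.card := by
      rw [hsum] at ho; exact_mod_cast ho
    have := h F hodd
    omega
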